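/- For a 2n×2n scattering matrix with transmission block t ∈ Mₙ(ℂ), and a density matrix ρ with sorted eigenvalues λ↓(ρ), the set of achievable total transmissions {tr(UρU† t†t) : U ∈ U(n)} equals the closed interval [λ↓(ρ)·σ²↑(t), λ↓(ρ)·σ²↓(t)], where σ²↓(t) and σ²↑(t) are the squared singular values of t sorted nonincreasingly and nondecreasingly. -/

import Mathlib

open Matrix ComplexOrder

/-- `x` rearranged in nondecreasing order. -/
noncomputable def sortAsc {n : ℕ} (x : Fin n → ℝ) : Fin n → ℝ := x ∘ (Tuple.sort x)

/-- `x` rearranged in nonincreasing order. -/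
noncomputable def sortDesc {n : ℕ} (x : Fin n → ℝ) : Fin n → ℝ := fun i => sortAsc x i.rev

namespace TransAux

variable {n : ℕ}

open Finset in
/-- the basic quantity: `f G = ∑ i k, ‖G i k‖² d k * e i` -/
noncomputable def fval (d e : Fin n → ℝ) (G : Matrix (Fin n) (Fin n) ℂ) : ℝ :=
  ∑ i, ∑ k, ‖G i k‖ ^ 2 * (d k * e i)

/-- value on permutation matrices -/
noncomputable def vperm (d e : Fin n → ℝ) (σ : Equiv.Perm (Fin n)) : ℝ :=
  ∑ i, d (σ i) * e i

lemma sortAsc_monotone (x : Fin n → ℝ) : Monotone (sortAsc x) :=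
  Tuple.monotone_sort x

lemma sortDesc_antitone (x : Fin n → ℝ) : Antitone (sortDesc x) := by
  intro i j hij
  exact sortAsc_monotone x (by simpa [Fin.rev_le_rev] using hij)

/-- sortDesc as composition with a permutation -/
lemma sortDesc_eq_comp (x : Fin n → ℝ) :
    sortDesc x = x ∘ ⇑((Fin.revPerm).trans (Tuple.sort x)) := by
  funext i
  simp [sortDesc, sortAsc]

lemma sortAsc_eq_comp (x : Fin n → ℝ) :
    sortAsc x = x ∘ ⇑(Tuple.sort x) := rfl

section perm

lemma permMatrix_apply (σ : Equiv.Perm (Fin n)) (i j : Fin n) :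
    (σ.permMatrix ℂ) i j = if σ i = j then 1 else 0 := by
  simp [PEquiv.toMatrix_apply, Equiv.toPEquiv_apply, eq_comm]

lemma permMatrix_conjTranspose (σ : Equiv.Perm (Fin n)) :
    (σ.permMatrix ℂ)ᴴ = (σ⁻¹).permMatrix ℂ := by
  ext i j
  simp only [conjTranspose_apply, permMatrix_apply]
  split_ifs with h1 h2 h2 <;>
    simp_all [Equiv.Perm.inv_eq_iff_eq, eq_comm, Complex.conj_eq_iff_re]

lemma permMatrix_mem_unitary (σ : Equiv.Perm (Fin n)) :
    σ.permMatrix ℂ ∈ Matrix.unitaryGroup (Fin n) ℂ := by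
  rw [Matrix.mem_unitaryGroup_iff]
  rw [Matrix.star_eq_conjTranspose, permMatrix_conjTranspose]
  show σ.toPEquiv.toMatrix * (σ⁻¹).toPEquiv.toMatrix = 1
  rw [← PEquiv.toMatrix_trans, ← Equiv.toPEquiv_trans]
  rw [show Equiv.trans σ σ⁻¹ = Equiv.refl (Fin n) from Equiv.ext fun x => σ.apply_symm_apply x |>.symm ▸ by simp,
    Equiv.toPEquiv_refl, PEquiv.toMatrix_refl]

lemma fval_permMatrix (d e : Fin n → ℝ) (σ : Equiv.Perm (Fin n)) :
    fval d e (σ.permMatrix ℂ) = vperm d e σ := by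
  unfold fval vperm
  refine Finset.sum_congr rfl fun i _ => ?_
  rw [Finset.sum_eq_single (σ i)]
  · rw [permMatrix_apply]; simp
  · intro k _ hk
    rw [permMatrix_apply]
    simp [Ne.symm hk]
  · simp

end perm

section rot

noncomputable def Rot (x y : Fin n) (θ : ℝ) : Matrix (Fin n) (Fin n) ℂ :=
  Matrix.of fun a b =>
    if a = x then (if b = x then (Real.cos θ : ℂ) else if b = y then (-Real.sin θ : ℂ) else 0)
    else if a = y then (if b = x then (Real.sin θ : ℂ) else if b = y then (Real.cos θ : ℂ) else 0)
    else if b = a then 1 else 0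

lemma sum_if_two {x y : Fin n} (hxy : x ≠ y) (u w : ℂ) (f : Fin n → ℂ) :
    ∑ b, (if b = x then u else if b = y then w else 0) * f b = u * f x + w * f y := by
  have : ∀ b : Fin n, (if b = x then u else if b = y then w else 0) * f b
      = (if b = x then u * f b else 0) + (if b = y then w * f b else 0) := by
    intro b
    by_cases hbx : b = x <;> by_cases hby : b = y <;> simp_all
  rw [Finset.sum_congr rfl (fun b _ => this b), Finset.sum_add_distrib,
    Finset.sum_ite_eq' Finset.univ x (fun b => u * f b),
    Finset.sum_ite_eq' Finset.univ y (fun b => w * f b)]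
  simp

lemma Rot_mem_unitary (x y : Fin n) (hxy : x ≠ y) (θ : ℝ) :
    Rot x y θ ∈ Matrix.unitaryGroup (Fin n) ℂ := by
  have key : (Real.cos θ : ℂ) * Real.cos θ + Real.sin θ * Real.sin θ = 1 := by
    norm_cast
    nlinarith [Real.sin_sq_add_cos_sq θ]
  rw [Matrix.mem_unitaryGroup_iff]
  ext a c
  rw [Matrix.mul_apply]
  simp only [Matrix.star_eq_conjTranspose, Matrix.conjTranspose_apply]
  by_cases hax : a = x <;> by_cases hay : a = y
  · exact absurd (hax ▸ hay ▸ rfl) hxy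
  · subst hax
    have : ∀ j, Rot a y θ a j * star (Rot a y θ c j)
        = (if j = a then (Real.cos θ : ℂ) else if j = y then (-Real.sin θ : ℂ) else 0) *
          star (Rot a y θ c j) := by
      intro j; simp [Rot]
    rw [Finset.sum_congr rfl fun j _ => this j, sum_if_two hxy]
    by_cases hca : c = a <;> by_cases hcy : c = y
    · exact absurd (hca.symm.trans hcy) hxy
    · subst hca
      simp only [Rot, Matrix.of_apply, if_pos rfl, Matrix.one_apply_eq, Ne.symm hxy, if_neg hxy,
        if_false, ite_true]
      simp only [star_neg, RCLike.star_def, Complex.conj_ofReal, neg_mul_neg, ite_true]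
      exact key
    · subst hcy
      simp only [Rot, Matrix.of_apply, Ne.symm hxy, if_neg hxy, if_false, if_pos rfl,
        Matrix.one_apply, ite_false, ite_true]
      simp only [star_neg, RCLike.star_def, Complex.conj_ofReal, ite_true,
        if_neg (fun h : c = a => hxy h.symm)]
      ring
    · simp only [Rot, Matrix.of_apply, if_neg hca, if_neg hcy, Matrix.one_apply,
        if_neg (Ne.symm hca)]
      simp [Ne.symm hca, Ne.symm hcy, eq_comm]
  · subst hay
    have : ∀ j, Rot x a θ a j * star (Rot x a θ c j)
        = (if j = x then (Real.sin θ : ℂ) else if j = a then (Real.cos θ : ℂ) else 0) *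
          star (Rot x a θ c j) := by
      intro j; simp [Rot, hax, Ne.symm hax]
    rw [Finset.sum_congr rfl fun j _ => this j, sum_if_two (Ne.symm hax)]
    by_cases hcx : c = x <;> by_cases hca : c = a
    · exact absurd (hcx.symm.trans hca) (Ne.symm hax)
    · subst hcx
      simp only [Rot, Matrix.of_apply, if_pos rfl, Matrix.one_apply, ite_true,
        if_neg (fun h : a = c => hax h)]
      simp only [star_neg, RCLike.star_def, Complex.conj_ofReal, ite_true,
        if_neg (fun h : a = c => hax h)]
      ring
    · subst hca
      simp only [Rot, Matrix.of_apply, if_neg hax, Matrix.one_apply_eq, ite_true, if_pos rfl,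
        ite_false]
      simp only [star_neg, RCLike.star_def, Complex.conj_ofReal, ite_true]
      linear_combination key
    · simp only [Rot, Matrix.of_apply, if_neg hcx, if_neg hca, Matrix.one_apply,
        if_neg (Ne.symm hca)]
      simp [Ne.symm hcx, Ne.symm hca, eq_comm]
  · have : ∀ j, Rot x y θ a j * star (Rot x y θ c j)
        = (if j = a then (1 : ℂ) else 0) * star (Rot x y θ c j) := by
      intro j; simp [Rot, hax, hay]
    rw [Finset.sum_congr rfl fun j _ => this j]
    simp only [ite_mul, one_mul, zero_mul]
    rw [Finset.sum_ite_eq' Finset.univ a]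
    by_cases hcx : c = x <;> by_cases hcy : c = y <;>
      simp_all [Rot, Matrix.one_apply, hax, hay, eq_comm]

/-- closed form for fval along the rotation path -/
lemma fval_rot_perm (d e : Fin n → ℝ) {x y : Fin n} (hxy : x ≠ y) (σ : Equiv.Perm (Fin n))
    (θ : ℝ) :
    fval d e (Rot x y θ * σ.permMatrix ℂ) =
      ∑ l, d (σ l) *
        (if l = x then Real.cos θ ^ 2 * e x + Real.sin θ ^ 2 * e y
         else if l = y then Real.sin θ ^ 2 * e x + Real.cos θ ^ 2 * e y
         else e l) := by
  unfold fval
  have h1 : ‖(Real.cos θ : ℂ)‖ ^ 2 = Real.cos θ ^ 2 := by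
    rw [Complex.norm_real]; exact sq_abs _
  have h2 : ‖(Real.sin θ : ℂ)‖ ^ 2 = Real.sin θ ^ 2 := by
    rw [Complex.norm_real]; exact sq_abs _
  have h3 : ‖(-(Real.sin θ : ℂ))‖ ^ 2 = Real.sin θ ^ 2 := by
    rw [norm_neg, Complex.norm_real]; exact sq_abs _
  have hentry : ∀ i k, (Rot x y θ * σ.permMatrix ℂ) i k = Rot x y θ i (σ⁻¹ k) := by
    intro i k
    rw [show σ.permMatrix ℂ = σ.toPEquiv.toMatrix from rfl, PEquiv.mul_toMatrix_toPEquiv]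
    rfl
  simp only [hentry]
  rw [Finset.sum_comm]
  rw [← Equiv.sum_comp σ (fun k => ∑ i, ‖Rot x y θ i (σ⁻¹ k)‖ ^ 2 * (d k * e i))]
  refine Finset.sum_congr rfl fun l _ => ?_
  simp only [Equiv.Perm.inv_def, Equiv.symm_apply_apply]
  have hsplit : ∀ f : Fin n → ℝ, ∑ i, f i = f x + (f y + ∑ i ∈ (Finset.univ.erase x).erase y, f i) := by
    intro f
    rw [Finset.add_sum_erase _ f (Finset.mem_erase.2 ⟨Ne.symm hxy, Finset.mem_univ y⟩),
      Finset.add_sum_erase _ f (Finset.mem_univ x)]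
  rw [hsplit]
  have hrest : ∑ i ∈ (Finset.univ.erase x).erase y, ‖Rot x y θ i l‖ ^ 2 * (d (σ l) * e i)
      = if l ∈ (Finset.univ.erase x).erase y then d (σ l) * e l else 0 := by
    rw [← Finset.sum_ite_eq ((Finset.univ.erase x).erase y) l (fun i => d (σ l) * e i)]
    refine Finset.sum_congr rfl fun i hi => ?_
    have hiy : i ≠ y := (Finset.mem_erase.1 hi).1
    have hix : i ≠ x := (Finset.mem_erase.1 (Finset.mem_erase.1 hi).2).1
    simp only [Rot, Matrix.of_apply, if_neg hix, if_neg hiy]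
    split_ifs with h <;> simp [h]
  rw [hrest]
  by_cases hlx : l = x <;> by_cases hly : l = y
  · exact absurd (hlx.symm.trans hly) hxy
  · subst hlx
    rw [if_pos rfl, if_neg (by simp)]
    have hRa : Rot l y θ l l = (Real.cos θ : ℂ) := by simp [Rot]
    have hRb : Rot l y θ y l = (Real.sin θ : ℂ) := by simp [Rot, Ne.symm hxy]
    rw [hRa, hRb, h1, h2]
    ring
  · subst hly
    rw [if_neg hlx, if_pos rfl, if_neg (by simp)]
    have hRa : Rot x l θ x l = -(Real.sin θ : ℂ) := by simp [Rot, hlx]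
    have hRb : Rot x l θ l l = (Real.cos θ : ℂ) := by simp [Rot, hlx, fun h : l = x => hlx h]
    rw [hRa, hRb, h3, h1]
    ring
  · rw [if_neg hlx, if_neg hly, if_pos (Finset.mem_erase.2 ⟨hly, Finset.mem_erase.2 ⟨hlx, Finset.mem_univ l⟩⟩)]
    have hRa : Rot x y θ x l = 0 := by simp [Rot, fun h : l = x => hlx h, fun h : l = y => hly h]
    have hRb : Rot x y θ y l = 0 := by simp [Rot, fun h : l = x => hlx h, fun h : l = y => hly h]
    rw [hRa, hRb]
    simp [mul_comm]

noncomputable def rotPathVal (d e : Fin n → ℝ) (x y : Fin n) (σ : Equiv.Perm (Fin n)) (θ : ℝ) : ℝ :=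
  ∑ l, d (σ l) *
    (if l = x then Real.cos θ ^ 2 * e x + Real.sin θ ^ 2 * e y
     else if l = y then Real.sin θ ^ 2 * e x + Real.cos θ ^ 2 * e y
     else e l)

lemma continuous_rotPathVal (d e : Fin n → ℝ) (x y : Fin n) (σ : Equiv.Perm (Fin n)) :
    Continuous (rotPathVal d e x y σ) := by
  unfold rotPathVal
  refine continuous_finset_sum _ fun l _ => Continuous.mul continuous_const ?_
  split_ifs <;> fun_prop

lemma rotPathVal_zero (d e : Fin n → ℝ) (x y : Fin n) (σ : Equiv.Perm (Fin n)) :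
    rotPathVal d e x y σ 0 = vperm d e σ := by
  unfold rotPathVal vperm
  refine Finset.sum_congr rfl fun l _ => ?_
  by_cases hlx : l = x
  · subst hlx; simp
  · by_cases hly : l = y
    · subst hly; simp [hlx]
    · simp [hlx, hly]

lemma rotPathVal_pi_div_two (d e : Fin n → ℝ) {x y : Fin n} (hxy : x ≠ y)
    (σ : Equiv.Perm (Fin n)) :
    rotPathVal d e x y σ (Real.pi / 2) = vperm d e (σ * Equiv.swap x y) := by
  unfold rotPathVal vperm
  rw [← Equiv.sum_comp (Equiv.swap x y) (fun i => d ((σ * Equiv.swap x y) i) * e i)]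
  refine Finset.sum_congr rfl fun l _ => ?_
  simp only [Equiv.Perm.mul_apply, Equiv.swap_apply_self]
  by_cases hlx : l = x
  · subst hlx
    simp [Equiv.swap_apply_left, Real.cos_pi_div_two, Real.sin_pi_div_two]
  · by_cases hly : l = y
    · subst hly
      simp [Equiv.swap_apply_right, Real.cos_pi_div_two, Real.sin_pi_div_two, hlx]
    · simp [Equiv.swap_apply_of_ne_of_ne hlx hly, Real.cos_pi_div_two, Real.sin_pi_div_two,
        hlx, hly]

/-- the achievable set -/
def achievable (d e : Fin n → ℝ) : Set ℝ :=
  {r : ℝ | ∃ G ∈ Matrix.unitaryGroup (Fin n) ℂ, r = fval d e G}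

lemma vperm_mem_achievable (d e : Fin n → ℝ) (σ : Equiv.Perm (Fin n)) :
    vperm d e σ ∈ achievable d e :=
  ⟨σ.permMatrix ℂ, permMatrix_mem_unitary σ, (fval_permMatrix d e σ).symm⟩

lemma chain (d e : Fin n → ℝ) (σ : Equiv.Perm (Fin n)) :
    ∃ C : Set ℝ, C ⊆ achievable d e ∧ IsPreconnected C ∧
      vperm d e 1 ∈ C ∧ vperm d e σ ∈ C := by
  refine Equiv.Perm.swap_induction_on' σ ?_ ?_
  · refine ⟨{vperm d e 1}, ?_, isPreconnected_singleton, rfl, rfl⟩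
    rintro r rfl
    exact vperm_mem_achievable d e 1
  · intro σ' x y hxy ih
    obtain ⟨C, hCsub, hCconn, hC1, hCσ⟩ := ih
    refine ⟨C ∪ (rotPathVal d e x y σ') '' Set.Icc 0 (Real.pi / 2), ?_, ?_, Or.inl hC1, ?_⟩
    · rintro r (hr | ⟨θ, -, rfl⟩)
      · exact hCsub hr
      · exact ⟨Rot x y θ * σ'.permMatrix ℂ,
          mul_mem (Rot_mem_unitary x y hxy θ) (permMatrix_mem_unitary σ'),
          (fval_rot_perm d e hxy σ' θ).symm⟩
    · refine IsPreconnected.union (vperm d e σ') hCσ ?_ hCconn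
        (isPreconnected_Icc.image _ (continuous_rotPathVal d e x y σ').continuousOn)
      exact ⟨0, Set.left_mem_Icc.2 (by positivity), rotPathVal_zero d e x y σ'⟩
    · exact Or.inr ⟨Real.pi / 2, Set.right_mem_Icc.2 (by positivity),
        rotPathVal_pi_div_two d e hxy σ'⟩

end rot

section bounds

variable (d e : Fin n → ℝ)

/-- the descending sort as `d` composed with a permutation -/
noncomputable def descPerm (x : Fin n → ℝ) : Equiv.Perm (Fin n) :=
  (Fin.revPerm).trans (Tuple.sort x)

lemma sortDesc_descPerm (x : Fin n → ℝ) (i : Fin n) :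
    sortDesc x i = x (descPerm x i) := by
  rw [sortDesc_eq_comp]; rfl

lemma vperm_le_hi (σ : Equiv.Perm (Fin n)) :
    vperm d e σ ≤ ∑ i, sortDesc d i * sortDesc e i := by
  have hmono : Monovary (sortDesc d) (sortDesc e) :=
    (sortDesc_antitone d).monovary (sortDesc_antitone e)
  have key := hmono.sum_comp_perm_mul_le_sum_mul
    (σ := (descPerm e).trans (σ.trans (descPerm d).symm))
  refine le_trans (le_of_eq ?_) key
  unfold vperm
  rw [← Equiv.sum_comp (descPerm e) (fun i => d (σ i) * e i)]
  refine Finset.sum_congr rfl fun j _ => ?_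
  rw [sortDesc_descPerm, sortDesc_descPerm]
  simp [Equiv.trans_apply]

lemma lo_le_vperm (σ : Equiv.Perm (Fin n)) :
    ∑ i, sortDesc d i * sortAsc e i ≤ vperm d e σ := by
  have hanti : Antivary (sortDesc d) (sortAsc e) :=
    (sortDesc_antitone d).antivary (sortAsc_monotone e)
  have key := hanti.sum_mul_le_sum_comp_perm_mul
    (σ := (Tuple.sort e).trans (σ.trans (descPerm d).symm))
  refine le_trans key (le_of_eq ?_)
  unfold vperm
  rw [← Equiv.sum_comp (Tuple.sort e) (fun i => d (σ i) * e i)]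
  refine Finset.sum_congr rfl fun j _ => ?_
  rw [sortDesc_descPerm]
  simp [Equiv.trans_apply, sortAsc]

lemma lo_eq_vperm :
    ∑ i, sortDesc d i * sortAsc e i = vperm d e (((Tuple.sort e).symm).trans (descPerm d)) := by
  unfold vperm
  rw [← Equiv.sum_comp (Tuple.sort e)
    (fun j => d ((((Tuple.sort e).symm).trans (descPerm d)) j) * e j)]
  refine Finset.sum_congr rfl fun i _ => ?_
  rw [sortDesc_descPerm]
  simp [Equiv.trans_apply, sortAsc]

lemma hi_eq_vperm :
    ∑ i, sortDesc d i * sortDesc e i = vperm d e (((descPerm e).symm).trans (descPerm d)) := by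
  unfold vperm
  rw [← Equiv.sum_comp (descPerm e)
    (fun j => d ((((descPerm e).symm).trans (descPerm d)) j) * e j)]
  refine Finset.sum_congr rfl fun i _ => ?_
  rw [sortDesc_descPerm, sortDesc_descPerm]
  simp [Equiv.trans_apply]

lemma permMatrix_apply_real (σ : Equiv.Perm (Fin n)) (i j : Fin n) :
    (σ.permMatrix ℝ) i j = if σ i = j then 1 else 0 := by
  simp [PEquiv.toMatrix_apply, Equiv.toPEquiv_apply, eq_comm]

lemma realperm_sum (σ : Equiv.Perm (Fin n)) :
    ∑ i, ∑ k, (σ.permMatrix ℝ) i k * (d k * e i) = vperm d e σ := by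
  unfold vperm
  refine Finset.sum_congr rfl fun i _ => ?_
  rw [Finset.sum_eq_single (σ i)]
  · rw [permMatrix_apply_real]; simp
  · intro k _ hk
    rw [permMatrix_apply_real]
    simp [Ne.symm hk]
  · simp

lemma unitary_row_sum {G : Matrix (Fin n) (Fin n) ℂ}
    (hG : G ∈ Matrix.unitaryGroup (Fin n) ℂ) (i : Fin n) :
    ∑ k, ‖G i k‖ ^ 2 = 1 := by
  have h1 : G * Gᴴ = 1 := by
    simpa [Matrix.star_eq_conjTranspose] using (Matrix.mem_unitaryGroup_iff.mp hG)
  have h2 := congrArg (fun M => (M i i).re) h1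
  simp only [Matrix.mul_apply, Matrix.conjTranspose_apply, Matrix.one_apply_eq,
    Complex.one_re] at h2
  rw [← h2, Complex.re_sum]
  refine Finset.sum_congr rfl fun k _ => ?_
  rw [RCLike.star_def, Complex.mul_conj]
  simp [Complex.normSq_eq_norm_sq, sq_abs, ← Complex.ofReal_pow,
    Complex.ofReal_re]

lemma unitary_col_sum {G : Matrix (Fin n) (Fin n) ℂ}
    (hG : G ∈ Matrix.unitaryGroup (Fin n) ℂ) (k : Fin n) :
    ∑ i, ‖G i k‖ ^ 2 = 1 := by
  have h1 : Gᴴ * G = 1 := by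
    simpa [Matrix.star_eq_conjTranspose] using (Matrix.mem_unitaryGroup_iff'.mp hG)
  have h2 := congrArg (fun M => (M k k).re) h1
  simp only [Matrix.mul_apply, Matrix.conjTranspose_apply, Matrix.one_apply_eq,
    Complex.one_re] at h2
  rw [← h2, Complex.re_sum]
  refine Finset.sum_congr rfl fun i _ => ?_
  rw [RCLike.star_def, mul_comm, Complex.mul_conj]
  simp [Complex.normSq_eq_norm_sq, sq_abs, ← Complex.ofReal_pow,
    Complex.ofReal_re]

lemma fval_eq_weighted {G : Matrix (Fin n) (Fin n) ℂ}
    (hG : G ∈ Matrix.unitaryGroup (Fin n) ℂ) :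
    ∃ w : Equiv.Perm (Fin n) → ℝ, (∀ σ, 0 ≤ w σ) ∧ ∑ σ, w σ = 1 ∧
      fval d e G = ∑ σ, w σ * vperm d e σ := by
  set B : Matrix (Fin n) (Fin n) ℝ := Matrix.of fun i k => ‖G i k‖ ^ 2 with hB
  have hBds : B ∈ doublyStochastic ℝ (Fin n) := by
    rw [mem_doublyStochastic_iff_sum]
    exact ⟨fun i k => by simp only [hB, Matrix.of_apply]; positivity,
      fun i => unitary_row_sum hG i, fun k => unitary_col_sum hG k⟩
  obtain ⟨w, hw0, hw1, hwB⟩ := exists_eq_sum_perm_of_mem_doublyStochastic hBds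
  refine ⟨w, hw0, hw1, ?_⟩
  have hfv : fval d e G = ∑ i, ∑ k, B i k * (d k * e i) := rfl
  rw [hfv, ← hwB]
  simp only [Matrix.sum_apply, Matrix.smul_apply, smul_eq_mul, Finset.sum_mul]
  have hR : ∀ σ : Equiv.Perm (Fin n), w σ * vperm d e σ
      = ∑ i, ∑ k, w σ * ((σ.permMatrix ℝ) i k * (d k * e i)) := by
    intro σ
    rw [← realperm_sum d e σ, Finset.mul_sum]
    exact Finset.sum_congr rfl fun i _ => by rw [Finset.mul_sum]
  rw [Finset.sum_congr rfl fun σ _ => hR σ]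
  conv_rhs => rw [Finset.sum_comm]
  refine Finset.sum_congr rfl fun i _ => ?_
  conv_rhs => rw [Finset.sum_comm]
  refine Finset.sum_congr rfl fun k _ => ?_
  exact Finset.sum_congr rfl fun σ _ => by ring

end bounds

theorem achievable_eq_Icc (d e : Fin n → ℝ) :
    achievable d e = Set.Icc (∑ i, sortDesc d i * sortAsc e i)
      (∑ i, sortDesc d i * sortDesc e i) := by
  apply Set.Subset.antisymm
  · rintro r ⟨G, hG, rfl⟩
    obtain ⟨w, hw0, hw1, hfw⟩ := fval_eq_weighted d e hG
    constructor
    · calc ∑ i, sortDesc d i * sortAsc e i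
          = ∑ σ : Equiv.Perm (Fin n), w σ * (∑ i, sortDesc d i * sortAsc e i) := by
            rw [← Finset.sum_mul, hw1, one_mul]
        _ ≤ ∑ σ : Equiv.Perm (Fin n), w σ * vperm d e σ :=
            Finset.sum_le_sum fun σ _ => mul_le_mul_of_nonneg_left (lo_le_vperm d e σ) (hw0 σ)
        _ = fval d e G := hfw.symm
    · calc fval d e G = ∑ σ : Equiv.Perm (Fin n), w σ * vperm d e σ := hfw
        _ ≤ ∑ σ : Equiv.Perm (Fin n), w σ * (∑ i, sortDesc d i * sortDesc e i) :=
            Finset.sum_le_sum fun σ _ => mul_le_mul_of_nonneg_left (vperm_le_hi d e σ) (hw0 σ)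
        _ = ∑ i, sortDesc d i * sortDesc e i := by rw [← Finset.sum_mul, hw1, one_mul]
  · intro r hr
    obtain ⟨C0, h0sub, h0conn, h01, h0σ⟩ := chain d e (((Tuple.sort e).symm).trans (descPerm d))
    obtain ⟨C1, h1sub, h1conn, h11, h1σ⟩ := chain d e (((descPerm e).symm).trans (descPerm d))
    have hU : IsPreconnected (C0 ∪ C1) :=
      IsPreconnected.union (vperm d e 1) h01 h11 h0conn h1conn
    have hsub : Set.Icc (∑ i, sortDesc d i * sortAsc e i)
        (∑ i, sortDesc d i * sortDesc e i) ⊆ C0 ∪ C1 := by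
      rw [lo_eq_vperm d e, hi_eq_vperm d e]
      exact hU.Icc_subset (Or.inl h0σ) (Or.inr h1σ)
    rcases hsub hr with h | h
    · exact h0sub h
    · exact h1sub h

lemma trace_diag_re (d e : Fin n → ℝ) (G : Matrix (Fin n) (Fin n) ℂ) :
    ((G * Matrix.diagonal (fun k => (d k : ℂ)) * Gᴴ
        * Matrix.diagonal (fun i => (e i : ℂ))).trace).re = fval d e G := by
  unfold fval
  rw [Matrix.trace, Complex.re_sum]
  refine Finset.sum_congr rfl fun i _ => ?_
  rw [Matrix.diag_apply, Matrix.mul_diagonal, Matrix.mul_apply]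
  have hterm : ∀ k, (G * Matrix.diagonal (fun k => (d k : ℂ))) i k * Gᴴ k i
      = ((d k * ‖G i k‖ ^ 2 : ℝ) : ℂ) := by
    intro k
    rw [Matrix.mul_diagonal, Matrix.conjTranspose_apply, RCLike.star_def]
    rw [show G i k * (d k : ℂ) * (starRingEnd ℂ) (G i k)
        = (d k : ℂ) * (G i k * (starRingEnd ℂ) (G i k)) by ring, Complex.mul_conj,
      ← Complex.ofReal_mul]
    congr 1
    simp [Complex.normSq_eq_norm_sq, sq_abs]
  rw [Finset.sum_congr rfl fun k _ => hterm k, ← Complex.ofReal_sum, ← Complex.ofReal_mul,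
    Complex.ofReal_re, Finset.sum_mul]
  exact Finset.sum_congr rfl fun k _ => by ring

end TransAux

/-- The achievable total transmissions `tr(UρU† t†t)` over all unitaries `U` form the closed
interval `[λ↓(ρ)·σ²↑(t), λ↓(ρ)·σ²↓(t)]`, where the squared singular values of `t` are the
eigenvalues of the Hermitian PSD matrix `t†t`. -/
theorem transmission_unitary_orbit_eq_Icc {n : ℕ} (ρ t : Matrix (Fin n) (Fin n) ℂ)
    (hρ : ρ.PosSemidef) (htr : ρ.trace = 1) :
    {r : ℝ | ∃ U ∈ Matrix.unitaryGroup (Fin n) ℂ, r = ((U * ρ * Uᴴ * (tᴴ * t)).trace).re} =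
      Set.Icc
        (∑ i, sortDesc hρ.1.eigenvalues i *
          sortAsc (Matrix.posSemidef_conjTranspose_mul_self t).1.eigenvalues i)
        (∑ i, sortDesc hρ.1.eigenvalues i *
          sortDesc (Matrix.posSemidef_conjTranspose_mul_self t).1.eigenvalues i) := by
  classical
  set d : Fin n → ℝ := hρ.1.eigenvalues with hd
  set e : Fin n → ℝ := (Matrix.posSemidef_conjTranspose_mul_self t).1.eigenvalues with he
  have hA : (tᴴ * t).IsHermitian := (Matrix.posSemidef_conjTranspose_mul_self t).1
  set V : Matrix (Fin n) (Fin n) ℂ := (hρ.1.eigenvectorUnitary : Matrix (Fin n) (Fin n) ℂ)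
    with hVdef
  set W : Matrix (Fin n) (Fin n) ℂ :=
    ((Matrix.posSemidef_conjTranspose_mul_self t).1.eigenvectorUnitary :
      Matrix (Fin n) (Fin n) ℂ) with hWdef
  have hV : V ∈ Matrix.unitaryGroup (Fin n) ℂ := (hρ.1.eigenvectorUnitary).2
  have hW : W ∈ Matrix.unitaryGroup (Fin n) ℂ :=
    ((Matrix.posSemidef_conjTranspose_mul_self t).1.eigenvectorUnitary).2
  have hVV : Vᴴ * V = 1 := Matrix.mem_unitaryGroup_iff'.mp hV
  have hWW : Wᴴ * W = 1 := Matrix.mem_unitaryGroup_iff'.mp hW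
  have hρspec : ρ = V * Matrix.diagonal (fun k => (d k : ℂ)) * Vᴴ := by
    rw [← Matrix.star_eq_conjTranspose]
    exact hρ.1.spectral_theorem
  have hAspec : tᴴ * t = W * Matrix.diagonal (fun k => (e k : ℂ)) * Wᴴ := by
    rw [← Matrix.star_eq_conjTranspose]
    exact (Matrix.posSemidef_conjTranspose_mul_self t).1.spectral_theorem
  have key : ∀ U ∈ Matrix.unitaryGroup (Fin n) ℂ,
      ((U * ρ * Uᴴ * (tᴴ * t)).trace).re = TransAux.fval d e (Wᴴ * U * V) := by
    intro U hU
    rw [← TransAux.trace_diag_re d e (Wᴴ * U * V)]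
    congr 1
    calc (U * ρ * Uᴴ * (tᴴ * t)).trace
        = ((U * ρ * Uᴴ * (W * Matrix.diagonal (fun k => (e k : ℂ)))) * Wᴴ).trace := by
          rw [hAspec]; simp only [Matrix.mul_assoc]
      _ = (Wᴴ * (U * ρ * Uᴴ * (W * Matrix.diagonal (fun k => (e k : ℂ))))).trace :=
          Matrix.trace_mul_comm _ _
      _ = (Wᴴ * U * V * Matrix.diagonal (fun k => (d k : ℂ)) * (Wᴴ * U * V)ᴴ
            * Matrix.diagonal (fun k => (e k : ℂ))).trace := by
          rw [hρspec]
          simp only [Matrix.conjTranspose_mul, Matrix.conjTranspose_conjTranspose,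
            Matrix.mul_assoc]
  have hset : {r : ℝ | ∃ U ∈ Matrix.unitaryGroup (Fin n) ℂ,
      r = ((U * ρ * Uᴴ * (tᴴ * t)).trace).re} = TransAux.achievable d e := by
    ext r
    constructor
    · rintro ⟨U, hU, rfl⟩
      exact ⟨Wᴴ * U * V, mul_mem (mul_mem (Unitary.star_mem hW) hU) hV, key U hU⟩
    · rintro ⟨G, hG, rfl⟩
      have hmem : W * G * Vᴴ ∈ Matrix.unitaryGroup (Fin n) ℂ :=
        mul_mem (mul_mem hW hG) (Unitary.star_mem hV)
      refine ⟨W * G * Vᴴ, hmem, ?_⟩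
      rw [key _ hmem]
      have hG' : Wᴴ * (W * G * Vᴴ) * V = G := by
        calc Wᴴ * (W * G * Vᴴ) * V = Wᴴ * W * G * (Vᴴ * V) := by
              simp only [Matrix.mul_assoc]
          _ = G := by rw [hWW, hVV, one_mul, mul_one]
      rw [hG']
  rw [hset, TransAux.achievable_eq_Icc]
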